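/- arXiv:math/0507508 — 3 statements merged into one kernel-verified Lean document; each statement's English description precedes it below -/
import Mathlib

section
/- Let W be a complex vector space and B'' : V × V̄ → U a sesquilinear-type map (complex bilinear on V × conjugate(V)). If for all linear maps L : V → V̄ and all v, v' ∈ V one has B''(L̄v, v̄') = B''(L̄v', v̄), and dim V ≥ 2, then B'' = 0. -/
/-- If `B'' : V × V̄ → U` (modeled as a sesquilinear map `B : V →ₗ V →ₛₗ U`,
`B x y = B''(x, ȳ)`) satisfies `B''(L̄v, v̄') = B''(L̄v', v̄)` for all `L ∈ Hom(V, V̄)`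
(modeled as antilinear maps `L : V →ₛₗ V`) and all `v, v' ∈ V`, and `dim V ≥ 2`,
then `B'' = 0`. -/
theorem stmt_0 {V U : Type*} [AddCommGroup V] [Module ℂ V] [AddCommGroup U] [Module ℂ U]
    [FiniteDimensional ℂ V]
    (B : V →ₗ[ℂ] V →ₛₗ[starRingEnd ℂ] U)
    (hdim : 2 ≤ Module.finrank ℂ V)
    (h : ∀ (L : V →ₛₗ[starRingEnd ℂ] V) (v v' : V), B (L v) v' = B (L v') v) :
    B = 0 := by
  ext x y
  simp only [LinearMap.zero_apply]
  rcases eq_or_ne y 0 with rfl | hy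
  · simp
  -- span of y is a proper submodule
  have hlt : Submodule.span ℂ {y} < ⊤ := by
    refine lt_top_iff_ne_top.2 fun htop => ?_
    have h1 : Module.finrank ℂ V ≤ 1 := by
      have := finrank_span_le_card (R := ℂ) ({y} : Set V)
      rw [htop, finrank_top] at this
      simpa using this
    omega
  obtain ⟨f, hf0, hfbot⟩ :=
    Submodule.exists_dual_map_eq_bot_of_lt_top hlt inferInstance
  have hfy : f y = 0 := by
    have : f y ∈ (Submodule.span ℂ {y}).map f :=
      Submodule.mem_map_of_mem (Submodule.mem_span_singleton_self y)
    rw [hfbot] at this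
    simpa using this
  obtain ⟨v, hv⟩ : ∃ v, f v ≠ 0 := by
    by_contra hc
    push_neg at hc
    exact hf0 (LinearMap.ext fun w => hc w)
  -- the antilinear map L w = conj((f v)⁻¹ * f w) • x
  let L : V →ₛₗ[starRingEnd ℂ] V :=
    { toFun := fun w => (starRingEnd ℂ) ((f v)⁻¹ * f w) • x
      map_add' := by
        intro a b
        simp [mul_add, add_smul]
      map_smul' := by
        intro c a
        simp only [map_smul, smul_eq_mul, map_mul]
        rw [smul_smul]
        ring_nf }
  have hLv : L v = x := by
    simp only [L, LinearMap.coe_mk, AddHom.coe_mk]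
    rw [inv_mul_cancel₀ hv]
    simp
  have hLy : L y = 0 := by
    simp only [L, LinearMap.coe_mk, AddHom.coe_mk, hfy]
    simp
  have := h L v y
  rw [hLv, hLy] at this
  simpa using this
end

section
/- Let V be a finite-dimensional complex vector space, and let Ω₁ be the set of vectors v in V⊕V̄ arising as v ∈ W⊗ℂ (W a real vector space of dimension 2m, m≥2, with W⊗ℂ = V⊕V̄) such that v and v̄ are ℂ-linearly independent. Then the complement of Ω₁ in W⊗ℂ is a real algebraic subset of real codimension 2m−1; in particular, for m ≥ 2, Ω₁ is connected. -/
open Module Submodule Complex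

set_option linter.unusedSectionVars false
set_option maxHeartbeats 1000000

namespace Stmt8Aux

variable {Wc : Type*} [NormedAddCommGroup Wc] [NormedSpace ℂ Wc]

lemma sigma_real_smul (σ : Wc →ₛₗ[starRingEnd ℂ] Wc) (r : ℝ) (w : Wc) :
    σ (r • w) = r • σ w := by
  rw [← Complex.coe_smul, ← Complex.coe_smul, map_smulₛₗ, Complex.conj_ofReal]

/-- fixed points of σ as an ℝ-submodule -/
def fixedW (σ : Wc →ₛₗ[starRingEnd ℂ] Wc) : Submodule ℝ Wc where
  carrier := {w | σ w = w}
  add_mem' := by intro x y hx hy; simp only [Set.mem_setOf_eq, map_add] at *; rw [hx, hy]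
  zero_mem' := by simp
  smul_mem' := by intro r x hx; simp only [Set.mem_setOf_eq] at *; rw [sigma_real_smul, hx]

lemma pair_swap {x y : Wc} {R : Type*} [CommRing R] [Module R Wc]
    (h : LinearIndependent R ![x, y]) : LinearIndependent R ![y, x] := by
  rw [LinearIndependent.pair_iff] at h ⊢
  intro s t hst
  have := h t s (by rw [← hst]; abel)
  exact ⟨this.2, this.1⟩

lemma indep_of_notmem_span {x b : Wc} (hb : b ≠ 0)
    (hx : x ∉ span ℝ ({b} : Set Wc)) : LinearIndependent ℝ ![x, b] := by
  rw [LinearIndependent.pair_iff]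
  intro s t hst
  by_cases hs : s = 0
  · subst hs
    simp only [zero_smul, zero_add, smul_eq_zero] at hst
    exact ⟨rfl, hst.resolve_right hb⟩
  · exfalso
    apply hx
    have h1 : s • x = (-t) • b := by rw [← sub_eq_zero, ← hst]; module
    have h2 : x = (s⁻¹ * (-t)) • b := by
      rw [← smul_smul, ← h1, inv_smul_smul₀ hs]
    rw [h2]
    exact smul_mem _ _ (subset_span rfl)

/-- points on the segment from x to z stay independent from b -/
lemma seg_indep {x z b : Wc} (hxb : LinearIndependent ℝ ![x, b])
    (hz : z ∉ span ℝ ({x, b} : Set Wc)) (t : ℝ) :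
    LinearIndependent ℝ ![(1 - t) • x + t • z, b] := by
  rw [LinearIndependent.pair_iff]
  intro s u hsu
  by_cases hs : s = 0
  · subst hs
    simp only [zero_smul, zero_add, smul_eq_zero] at hsu
    have hb : b ≠ 0 := by simpa using hxb.ne_zero 1
    exact ⟨rfl, hsu.resolve_right hb⟩
  · by_cases ht : t = 0
    · subst ht
      have := (LinearIndependent.pair_iff.1 hxb) s u (by rw [← hsu]; module)
      exact ⟨this.1, this.2⟩
    · exfalso
      apply hz
      have hst : s * t ≠ 0 := mul_ne_zero hs ht
      have h1 : (s * t) • z = (-(s * (1 - t))) • x + (-u) • b := by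
        rw [← sub_eq_zero, ← hsu]; module
      have h2 : z = ((s*t)⁻¹ * (-(s * (1 - t)))) • x + ((s*t)⁻¹ * (-u)) • b := by
        rw [← smul_smul, ← smul_smul, ← smul_add, ← h1, inv_smul_smul₀ hst]
      rw [h2]
      exact add_mem (smul_mem _ _ (subset_span (by simp))) (smul_mem _ _ (subset_span (by simp)))

def SS (σ : Wc →ₛₗ[starRingEnd ℂ] Wc) : Set (Wc × Wc) :=
  {p | σ p.1 = p.1 ∧ σ p.2 = p.2 ∧ LinearIndependent ℝ ![p.1, p.2]}

lemma joined_seg (σ : Wc →ₛₗ[starRingEnd ℂ] Wc) {x z b : Wc}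
    (hx : σ x = x) (hz : σ z = z) (hb : σ b = b)
    (hxb : LinearIndependent ℝ ![x, b])
    (hzs : z ∉ span ℝ ({x, b} : Set Wc)) :
    JoinedIn (SS σ) (x, b) (z, b) := by
  have hf : Continuous (fun t : ℝ => ((1 - t) • x + t • z, b)) := by
    apply Continuous.prodMk
    · exact ((continuous_const.sub continuous_id).smul continuous_const).add
        (continuous_id.smul continuous_const)
    · exact continuous_const
  apply JoinedIn.ofLine hf.continuousOn (by simp) (by simp)
  rintro p ⟨t, _, rfl⟩
  refine ⟨?_, hb, seg_indep hxb hzs t⟩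
  simp only [map_add, sigma_real_smul, hx, hz]

lemma exists_z (σ : Wc →ₛₗ[starRingEnd ℂ] Wc) [FiniteDimensional ℂ Wc]
    (h4 : 4 ≤ finrank ℝ (fixedW σ)) (x y w : Wc) :
    ∃ z, σ z = z ∧ z ∉ span ℝ ({x, y, w} : Set Wc) := by
  haveI : FiniteDimensional ℝ Wc := Module.Finite.trans ℂ Wc
  by_contra hcon
  push_neg at hcon
  have hle : fixedW σ ≤ span ℝ ({x, y, w} : Set Wc) := fun u hu => hcon u hu
  have h1 : finrank ℝ (fixedW σ) ≤ finrank ℝ (span ℝ ({x, y, w} : Set Wc)) :=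
    Submodule.finrank_mono hle
  have h2 : finrank ℝ (span ℝ ({x, y, w} : Set Wc)) ≤ 3 := by
    have hr : ({x, y, w} : Set Wc) = Set.range ![x, y, w] := by
      ext u; simp [Matrix.range_cons, Matrix.range_empty]; tauto
    rw [hr]
    have := finrank_range_le_card (R := ℝ) ![x, y, w]
    simpa [Set.finrank] using this
  omega

section Moves
variable (σ : Wc →ₛₗ[starRingEnd ℂ] Wc) [FiniteDimensional ℂ Wc]

lemma joined_first (h4 : 4 ≤ finrank ℝ (fixedW σ)) {a a' b : Wc}
    (ha : σ a = a) (ha' : σ a' = a') (hb : σ b = b)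
    (h1 : LinearIndependent ℝ ![a, b]) (h2 : LinearIndependent ℝ ![a', b]) :
    JoinedIn (SS σ) (a, b) (a', b) := by
  obtain ⟨z, hz, hzs⟩ := exists_z σ h4 a a' b
  have hz1 : z ∉ span ℝ ({a, b} : Set Wc) :=
    fun h => hzs (span_mono (by intro u hu; rcases hu with h|h; exact Or.inl h; right; right; exact h) h)
  have hz2 : z ∉ span ℝ ({a', b} : Set Wc) :=
    fun h => hzs (span_mono (by intro u hu; rcases hu with h|h; right; exact Or.inl h; right; right; exact h) h)
  exact (joined_seg σ ha hz hb h1 hz1).trans (joined_seg σ ha' hz hb h2 hz2).symm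

lemma SS_swap {p q : Wc × Wc} (h : JoinedIn (SS σ) p q) :
    JoinedIn (SS σ) (p.2, p.1) (q.2, q.1) := by
  have hc : Continuous (fun r : Wc × Wc => (r.2, r.1)) := continuous_snd.prodMk continuous_fst
  have := (h.map hc).mono (by rintro r ⟨u, hu, rfl⟩; exact ⟨hu.2.1, hu.1, pair_swap hu.2.2⟩ : _ ⊆ SS σ)
  simpa using this

lemma joined_second (h4 : 4 ≤ finrank ℝ (fixedW σ)) {a b b' : Wc}
    (ha : σ a = a) (hb : σ b = b) (hb' : σ b' = b')
    (h1 : LinearIndependent ℝ ![a, b]) (h2 : LinearIndependent ℝ ![a, b']) :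
    JoinedIn (SS σ) (a, b) (a, b') := by
  have := SS_swap σ (joined_first σ h4 hb hb' ha (pair_swap h1) (pair_swap h2))
  simpa using this

lemma SS_nonempty (h4 : 4 ≤ finrank ℝ (fixedW σ)) : (SS σ).Nonempty := by
  obtain ⟨b, hb, hbs⟩ := exists_z σ h4 0 0 0
  have hb0 : b ≠ 0 := by rintro rfl; exact hbs (zero_mem _)
  obtain ⟨a, ha, has⟩ := exists_z σ h4 b b b
  have h1 : LinearIndependent ℝ ![a, b] := by
    apply indep_of_notmem_span hb0
    exact fun h => has (span_mono (by intro u hu; exact Or.inl hu) h)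
  exact ⟨(a, b), ha, hb, h1⟩

lemma SS_pathConnected (h4 : 4 ≤ finrank ℝ (fixedW σ)) : IsPathConnected (SS σ) := by
  rw [isPathConnected_iff]
  refine ⟨SS_nonempty σ h4, ?_⟩
  rintro ⟨a₀, b₀⟩ ⟨ha₀, hb₀, hi₀⟩ ⟨a₁, b₁⟩ ⟨ha₁, hb₁, hi₁⟩
  obtain ⟨a', ha', has⟩ := exists_z σ h4 b₀ b₀ b₁
  have hb₀0 : b₀ ≠ 0 := by simpa using hi₀.ne_zero 1
  have hb₁0 : b₁ ≠ 0 := by simpa using hi₁.ne_zero 1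
  have h1 : LinearIndependent ℝ ![a', b₀] := by
    apply indep_of_notmem_span hb₀0
    exact fun h => has (span_mono (by intro u hu; exact Or.inl hu) h)
  have h2 : LinearIndependent ℝ ![a', b₁] := by
    apply indep_of_notmem_span hb₁0
    exact fun h => has (span_mono (by intro u hu; right; right; exact hu) h)
  exact ((joined_first σ h4 ha₀ ha' hb₀ hi₀ h1).trans
    (joined_second σ h4 ha' hb₀ hb₁ h1 h2)).trans
    (joined_first σ h4 ha' ha₁ hb₁ h2 hi₁)

end Moves

/-- real and imaginary parts -/
lemma decomp (σ : Wc →ₛₗ[starRingEnd ℂ] Wc) (hσ : ∀ w, σ (σ w) = w) (v : Wc) :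
    ∃ a b : Wc, σ a = a ∧ σ b = b ∧ v = a + Complex.I • b := by
  refine ⟨((1:ℂ)/2) • (v + σ v), (Complex.I/2) • (σ v - v), ?_, ?_, ?_⟩
  · rw [map_smulₛₗ, map_add, hσ]
    rw [show (starRingEnd ℂ) ((1:ℂ)/2) = 1/2 by simp [Complex.ext_iff]]
    rw [add_comm]
  · rw [map_smulₛₗ, map_sub, hσ]
    rw [show (starRingEnd ℂ) (Complex.I/2) = -(Complex.I/2) by
      rw [map_div₀, Complex.conj_I, map_ofNat]; ring]
    rw [neg_smul, ← smul_neg, neg_sub]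
  · rw [smul_smul]
    match_scalars
    all_goals first
      | ring1
      | (ring_nf; simp only [Complex.I_sq]; try ring1)

lemma four_le_finrank (σ : Wc →ₛₗ[starRingEnd ℂ] Wc) [FiniteDimensional ℂ Wc]
    (hσ : ∀ w, σ (σ w) = w) (h : 4 ≤ finrank ℂ Wc) :
    4 ≤ finrank ℝ (fixedW σ) := by
  haveI : FiniteDimensional ℝ Wc := Module.Finite.trans ℂ Wc
  set n := finrank ℝ (fixedW σ) with hn
  let bW := finBasis ℝ (fixedW σ)
  let g : Fin n → Wc := fun i => (bW i : Wc)
  have hsub : ∀ w : Wc, σ w = w → w ∈ span ℂ (Set.range g) := by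
    intro w hw
    have h1 : w ∈ span ℝ (Set.range g) := by
      have heq : span ℝ (Set.range g) = fixedW σ := by
        have hr : Set.range g = (fixedW σ).subtype '' (Set.range bW) := by
          rw [← Set.range_comp]; rfl
        rw [hr, Submodule.span_image, bW.span_eq, Submodule.map_top, Submodule.range_subtype]
      rw [heq]; exact hw
    exact Submodule.span_subset_span ℝ ℂ _ h1
  have hsp : span ℂ (Set.range g) = ⊤ := by
    rw [eq_top_iff]
    intro v _
    obtain ⟨a, b, ha, hb, rfl⟩ := decomp σ hσ v
    exact add_mem (hsub a ha) (smul_mem _ _ (hsub b hb))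
  have hf := finrank_le_of_span_eq_top hsp
  simp only [Fintype.card_fin] at hf
  omega

/-- real independent pair of real vectors gives complex independent (v, σv) -/
lemma indep_C_of_indep_R (σ : Wc →ₛₗ[starRingEnd ℂ] Wc) {a b : Wc}
    (ha : σ a = a) (hb : σ b = b) (hab : LinearIndependent ℝ ![a, b]) :
    LinearIndependent ℂ ![a + Complex.I • b, σ (a + Complex.I • b)] := by
  have hσv : σ (a + Complex.I • b) = a - Complex.I • b := by
    rw [map_add, map_smulₛₗ, ha, hb, Complex.conj_I, neg_smul, ← sub_eq_add_neg]
  rw [hσv, LinearIndependent.pair_iff]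
  intro s t hst
  have key : (s + t) • a + ((s - t) * Complex.I) • b = 0 := by
    rw [← hst]; module
  have h2 : (starRingEnd ℂ) (s + t) • a + (starRingEnd ℂ) ((s - t) * Complex.I) • b = 0 := by
    have := congrArg σ key
    rwa [map_add, map_smulₛₗ, map_smulₛₗ, ha, hb, map_zero] at this
  have h3 : ((s + t) + (starRingEnd ℂ) (s + t)) • a
      + (((s - t) * Complex.I) + (starRingEnd ℂ) ((s - t) * Complex.I)) • b = 0 := by
    have hh : ((s + t) + (starRingEnd ℂ) (s + t)) • a
        + (((s - t) * Complex.I) + (starRingEnd ℂ) ((s - t) * Complex.I)) • b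
        = ((s + t) • a + ((s - t) * Complex.I) • b)
          + ((starRingEnd ℂ) (s + t) • a + (starRingEnd ℂ) ((s - t) * Complex.I) • b) := by
      module
    rw [hh, key, h2, add_zero]
  have h4 : ((s + t) - (starRingEnd ℂ) (s + t)) • a
      + (((s - t) * Complex.I) - (starRingEnd ℂ) ((s - t) * Complex.I)) • b = 0 := by
    have hh : ((s + t) - (starRingEnd ℂ) (s + t)) • a
        + (((s - t) * Complex.I) - (starRingEnd ℂ) ((s - t) * Complex.I)) • b
        = ((s + t) • a + ((s - t) * Complex.I) • b)
          - ((starRingEnd ℂ) (s + t) • a + (starRingEnd ℂ) ((s - t) * Complex.I) • b) := by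
      module
    rw [hh, key, h2, sub_zero]
  rw [Complex.add_conj, Complex.add_conj, Complex.coe_smul, Complex.coe_smul] at h3
  rw [Complex.sub_conj, Complex.sub_conj] at h4
  have h4' : Complex.I • (((2 * (s+t).im : ℝ) : ℂ) • a + ((2 * ((s-t)*Complex.I).im : ℝ) : ℂ) • b) = 0 := by
    rw [smul_add, smul_smul, smul_smul, mul_comm Complex.I, mul_comm Complex.I, ← h4]
  rw [smul_eq_zero] at h4'
  rcases h4' with h4' | h4'
  · exact absurd h4' Complex.I_ne_zero
  rw [Complex.coe_smul, Complex.coe_smul] at h4'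
  have e3 := LinearIndependent.pair_iff.1 hab _ _ h3
  have e4 := LinearIndependent.pair_iff.1 hab _ _ h4'
  have hα : s + t = 0 := by
    apply Complex.ext <;> simp only [Complex.zero_re, Complex.zero_im] <;>
      [linarith [e3.1]; linarith [e4.1]]
  have hβ : (s - t) * Complex.I = 0 := by
    apply Complex.ext <;> simp only [Complex.zero_re, Complex.zero_im] <;>
      [linarith [e3.2]; linarith [e4.2]]
  have hβ' : s - t = 0 := by
    rcases mul_eq_zero.1 hβ with h | h
    · exact h
    · exact absurd h Complex.I_ne_zero
  constructor
  · linear_combination (hα + hβ') / 2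
  · linear_combination (hα - hβ') / 2

/-- complex independence of (v, σv) gives real independence of real/imag parts -/
lemma indep_R_of_indep_C (σ : Wc →ₛₗ[starRingEnd ℂ] Wc) {v a b : Wc}
    (ha : σ a = a) (hb : σ b = b) (hveq : v = a + Complex.I • b)
    (hv : LinearIndependent ℂ ![v, σ v]) :
    LinearIndependent ℝ ![a, b] := by
  have hσv : σ v = a - Complex.I • b := by
    rw [hveq, map_add, map_smulₛₗ, ha, hb, Complex.conj_I, neg_smul, ← sub_eq_add_neg]
  rw [LinearIndependent.pair_iff]
  intro s t hst
  rw [← Complex.coe_smul, ← Complex.coe_smul] at hst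
  have hkey : ((s:ℂ)/2 - t*Complex.I/2) • v + ((s:ℂ)/2 + t*Complex.I/2) • (σ v) = 0 := by
    rw [hσv, hveq, ← hst]
    match_scalars
    all_goals first
      | ring1
      | (ring_nf; simp only [Complex.I_sq]; try ring1)
  obtain ⟨hc₁, hc₂⟩ := LinearIndependent.pair_iff.1 hv _ _ hkey
  have hs : (s : ℂ) = 0 := by linear_combination hc₁ + hc₂
  have htI : (t : ℂ) * Complex.I = 0 := by linear_combination hc₂ - hc₁
  have ht : (t : ℂ) = 0 := by
    rcases mul_eq_zero.1 htI with h | h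
    · exact h
    · exact absurd h Complex.I_ne_zero
  exact ⟨by exact_mod_cast hs, by exact_mod_cast ht⟩

end Stmt8Aux

open Stmt8Aux

/-- Let `W⊗ℂ = V ⊕ V̄` be the complexification of a real vector space `W` of
dimension `2m`, `m ≥ 2`, with conjugation `σ`, and let
`Ω₁ = {v | v, v̄ are ℂ-linearly independent}`.  The complement of `Ω₁` is the real
algebraic subset `{λw : λ ∈ ℂ, w real}` of real codimension `2m−1`; in particular, for
`m ≥ 2`, `Ω₁` is connected. -/
theorem stmt_8 {Wc : Type*} [NormedAddCommGroup Wc] [NormedSpace ℂ Wc]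
    [FiniteDimensional ℂ Wc]
    (σ : Wc →ₛₗ[starRingEnd ℂ] Wc) (hσ : ∀ w, σ (σ w) = w)
    (m : ℕ) (hm : 2 ≤ m) (hdim : Module.finrank ℂ Wc = 2 * m) :
    ({v : Wc | ¬ LinearIndependent ℂ ![v, σ v]}
        = {v : Wc | ∃ (c : ℂ) (w : Wc), σ w = w ∧ v = c • w})
    ∧ IsConnected {v : Wc | LinearIndependent ℂ ![v, σ v]} := by
  constructor
  · ext v
    simp only [Set.mem_setOf_eq]
    constructor
    · intro h
      by_cases hv : v = 0
      · exact ⟨0, 0, map_zero σ, by simp [hv]⟩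
      rw [LinearIndependent.pair_iff] at h
      push_neg at h
      obtain ⟨s, t, hst, hne⟩ := h
      have ht : t ≠ 0 := by
        rintro rfl
        simp only [zero_smul, add_zero, smul_eq_zero] at hst
        rcases hst with h | h
        · exact hne h rfl
        · exact hv h
      set μ : ℂ := t⁻¹ * (-s) with hμdef
      have hμ : σ v = μ • v := by
        have h1 : t • σ v = (-s) • v := by rw [← sub_eq_zero, ← hst]; module
        rw [← inv_smul_smul₀ ht (σ v), h1, smul_smul]
      have hv2 : (starRingEnd ℂ μ * μ) • v = v := by
        rw [← smul_smul, ← hμ, ← map_smulₛₗ σ, ← hμ, hσ]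
      have hμ1 : starRingEnd ℂ μ * μ = 1 := by
        by_contra hcon
        have : (starRingEnd ℂ μ * μ - 1) • v = 0 := by
          rw [sub_smul, one_smul, hv2, sub_self]
        rcases smul_eq_zero.1 this with h | h
        · exact hcon (by linear_combination h)
        · exact hv h
      obtain ⟨lam, hlam⟩ := IsAlgClosed.exists_pow_nat_eq μ (n := 2) (by norm_num)
      have hns : (Complex.normSq lam : ℂ) ^ 2 = 1 := by
        rw [← Complex.mul_conj]
        calc (lam * (starRingEnd ℂ) lam) ^ 2
            = (starRingEnd ℂ) (lam ^ 2) * lam ^ 2 := by rw [map_pow]; ring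
          _ = 1 := by rw [hlam, hμ1]
      have hns' : Complex.normSq lam = 1 := by
        have h2 : (Complex.normSq lam) ^ 2 = 1 := by exact_mod_cast hns
        nlinarith [Complex.normSq_nonneg lam]
      have hunit : starRingEnd ℂ lam * lam = 1 := by
        rw [mul_comm, Complex.mul_conj, hns']
        norm_num
      refine ⟨starRingEnd ℂ lam, lam • v, ?_, ?_⟩
      · rw [map_smulₛₗ, hμ, smul_smul, ← hlam]
        congr 1
        linear_combination lam * hunit
      · rw [smul_smul, hunit, one_smul]
    · rintro ⟨c, w, hw, rfl⟩
      intro hind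
      have h0 : starRingEnd ℂ c • (c • w) + (-c) • σ (c • w) = 0 := by
        rw [map_smulₛₗ σ, hw, smul_smul, smul_smul, ← add_smul]
        rw [show (starRingEnd ℂ) c * c + -c * (starRingEnd ℂ) c = 0 by ring, zero_smul]
      have := LinearIndependent.pair_iff.1 hind _ _ h0
      have hc0 : c = 0 := by
        have := this.2
        simpa using this
      have hv0 : c • w ≠ 0 := by simpa using hind.ne_zero 0
      exact hv0 (by rw [hc0, zero_smul])
  · have h4 : 4 ≤ finrank ℝ (fixedW σ) := by
      apply four_le_finrank σ hσ
      omega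
    have himg : {v : Wc | LinearIndependent ℂ ![v, σ v]}
        = (fun p : Wc × Wc => p.1 + Complex.I • p.2) '' SS σ := by
      ext v
      constructor
      · intro hv
        obtain ⟨a, b, ha, hb, hveq⟩ := decomp σ hσ v
        exact ⟨(a, b), ⟨ha, hb, indep_R_of_indep_C σ ha hb hveq hv⟩, hveq.symm⟩
      · rintro ⟨⟨a, b⟩, ⟨ha, hb, hab⟩, rfl⟩
        exact indep_C_of_indep_R σ ha hb hab
    rw [himg]
    have hcont : Continuous (fun p : Wc × Wc => p.1 + Complex.I • p.2) :=
      continuous_fst.add (continuous_snd.const_smul _)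
    exact ((SS_pathConnected σ h4).image hcont).isConnected
end

section
/- Define G : Hom(V,V̄) ⊕ Hom(U,Ū) → Hom(Λ²V, U) by G(L,M)(v,v') = conjugate(M B'(v,v')) − B''(L̄v, v̄') + B''(L̄v', v̄). If dim V = 2, dim U = 1, and (B',B'') ≠ (0,0), then G is surjective. -/
set_option maxHeartbeats 1000000 in
private noncomputable def mkAnti {V : Type*} [AddCommGroup V] [Module ℂ V]
    (e : Module.Basis (Fin 2) ℂ V) (w1 w2 : V) : V →ₛₗ[starRingEnd ℂ] V where
  toFun v := (starRingEnd ℂ) (e.repr v 0) • w1 + (starRingEnd ℂ) (e.repr v 1) • w2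
  map_add' x y := by simp [add_smul]; try abel
  map_smul' c x := by
    simp only [map_smul, Finsupp.smul_apply, smul_eq_mul, map_mul, RingHomCompTriple.comp_apply,
      RingHom.id_apply, mul_smul, smul_add]

private lemma mkAnti_apply {V : Type*} [AddCommGroup V] [Module ℂ V]
    (e : Module.Basis (Fin 2) ℂ V) (w1 w2 : V) (v : V) :
    mkAnti e w1 w2 v = (starRingEnd ℂ) (e.repr v 0) • w1 + (starRingEnd ℂ) (e.repr v 1) • w2 :=
  rfl

set_option maxHeartbeats 1000000 in
private noncomputable def mkM {U : Type*} [AddCommGroup U] [Module ℂ U]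
    (bu : Module.Basis (Fin 1) ℂ U) (t : U) : U →ₛₗ[starRingEnd ℂ] U where
  toFun u := (starRingEnd ℂ) (bu.repr u 0) • t
  map_add' x y := by simp [add_smul]
  map_smul' c x := by simp [smul_smul]

private lemma mkM_apply {U : Type*} [AddCommGroup U] [Module ℂ U]
    (bu : Module.Basis (Fin 1) ℂ U) (t u : U) :
    mkM bu t u = (starRingEnd ℂ) (bu.repr u 0) • t := rfl

private lemma alt_key {V U : Type*} [AddCommGroup V] [Module ℂ V] [AddCommGroup U] [Module ℂ U]
    (σ : ℂ →+* ℂ) (e : Module.Basis (Fin 2) ℂ V) (f : V → V → U)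
    (hadd1 : ∀ v w v', f (v + w) v' = f v v' + f w v')
    (hsmul1 : ∀ (c : ℂ) (v v' : V), f (c • v) v' = σ c • f v v')
    (hadd2 : ∀ v v' w', f v (v' + w') = f v v' + f v w')
    (hsmul2 : ∀ (c : ℂ) (v v' : V), f v (c • v') = σ c • f v v')
    (halt : ∀ v, f v v = 0)
    (h01 : f (e 0) (e 1) = 0) (v v' : V) : f v v' = 0 := by
  have h10 : f (e 1) (e 0) = 0 := by
    have h := halt (e 0 + e 1)
    rw [hadd1, hadd2, hadd2, halt, halt, h01] at h
    simpa using h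
  have hv : v = e.repr v 0 • e 0 + e.repr v 1 • e 1 := by
    have := e.sum_repr v
    rw [Fin.sum_univ_two] at this
    exact this.symm
  have hv' : v' = e.repr v' 0 • e 0 + e.repr v' 1 • e 1 := by
    have := e.sum_repr v'
    rw [Fin.sum_univ_two] at this
    exact this.symm
  rw [hv, hv']
  simp only [hadd1, hadd2, hsmul1, hsmul2, halt, h01, h10, smul_zero, add_zero, zero_add]

set_option maxHeartbeats 1000000 in
/-- With `dim V = 2`, `dim U = 1`, `B' ∈ Λ²(V)^∨⊗U` and
`B'' : V × V̄ → U` (modeled as a sesquilinear map `B : V →ₗ V →ₛₗ U`) not both zero, the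
map `G : Hom(V,V̄) ⊕ Hom(U,Ū) → Hom(Λ²V, U)`,
`G(L,M)(v,v') = conj(M B'(v,v')) − B''(L̄v, v̄') + B''(L̄v', v̄)` is surjective.
Here `Hom(V,V̄)` is modeled as antilinear maps `L : V →ₛₗ V` (so `L v = L̄v`),
`Hom(U,Ū)` as antilinear maps `M : U →ₛₗ U` (so `M u = conj(M u)` in `U`), and the target
`Hom(Λ²V,U)` as alternating conjugate-bilinear forms `C`. -/
theorem stmt_12 {V U : Type*} [AddCommGroup V] [Module ℂ V] [AddCommGroup U] [Module ℂ U]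
    [FiniteDimensional ℂ V] [FiniteDimensional ℂ U]
    (hdimV : Module.finrank ℂ V = 2) (hdimU : Module.finrank ℂ U = 1)
    (B' : V →ₗ[ℂ] V →ₗ[ℂ] U) (hB'alt : ∀ v, B' v v = 0)
    (B : V →ₗ[ℂ] V →ₛₗ[starRingEnd ℂ] U)
    (hne : ¬(B' = 0 ∧ B = 0)) :
    ∀ C : V →ₛₗ[starRingEnd ℂ] (V →ₛₗ[starRingEnd ℂ] U), (∀ v, C v v = 0) →
      ∃ (L : V →ₛₗ[starRingEnd ℂ] V) (M : U →ₛₗ[starRingEnd ℂ] U),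
        ∀ v v' : V, C v v' = M (B' v v') - B (L v) v' + B (L v') v := by
  intro C hCalt
  obtain ⟨e⟩ : Nonempty (Module.Basis (Fin 2) ℂ V) := ⟨Module.finBasisOfFinrankEq ℂ V hdimV⟩
  by_cases hB' : B' = 0
  · -- case B ≠ 0, B' = 0
    have hB : B ≠ 0 := fun h => hne ⟨hB', h⟩
    have hex : ∃ a : V, B a (e 0) ≠ 0 ∨ B a (e 1) ≠ 0 := by
      by_contra hc
      push_neg at hc
      apply hB
      apply LinearMap.ext
      intro a
      have h0 := (hc a).1
      have h1 := (hc a).2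
      apply e.ext
      intro i
      fin_cases i <;> simpa
    obtain ⟨a, ha⟩ := hex
    have hw : ∃ w1 w2 : V, C (e 0) (e 1) + B w1 (e 1) - B w2 (e 0) = 0 := by
      rcases ha with ha | ha
      · obtain ⟨μ, hμ⟩ := (finrank_eq_one_iff_of_nonzero' (B a (e 0)) ha).mp hdimU
          (C (e 0) (e 1))
        exact ⟨0, μ • a, by simp [← hμ, sub_eq_zero]⟩
      · obtain ⟨μ, hμ⟩ := (finrank_eq_one_iff_of_nonzero' (B a (e 1)) ha).mp hdimU
          (C (e 0) (e 1))
        refine ⟨-(μ • a), 0, by simp [← hμ]⟩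
    obtain ⟨w1, w2, hw⟩ := hw
    refine ⟨mkAnti e w1 w2, 0, ?_⟩
    intro v v'
    have key := alt_key (starRingEnd ℂ) e
      (fun v v' => C v v' - ((0 : U →ₛₗ[starRingEnd ℂ] U) (B' v v')
        - B (mkAnti e w1 w2 v) v' + B (mkAnti e w1 w2 v') v))
      (by intro v w v'; simp [map_add]; try abel)
      (by intro c v v'; simp [map_smulₛₗ, smul_sub, smul_add]; try abel)
      (by intro v v' w'; simp [map_add]; try abel)
      (by intro c v v'; simp [map_smulₛₗ, smul_sub, smul_add]; try abel)
      (by intro v; simp [hCalt])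
      (by
        simp only [LinearMap.zero_apply, mkAnti_apply, Module.Basis.repr_self]
        simp only [Finsupp.single_apply]
        norm_num
        rw [sub_eq_zero]
        linear_combination (norm := module) hw)
      v v'
    rw [sub_eq_zero] at key
    exact key
  · -- case B' ≠ 0
    have hB'e : B' (e 0) (e 1) ≠ 0 := by
      intro h0
      apply hB'
      ext v v'
      exact alt_key (RingHom.id ℂ) e (fun v v' => B' v v')
        (by intro v w v'; simp) (by intro c v v'; simp)
        (by intro v v' w'; simp) (by intro c v v'; simp)
        hB'alt h0 v v'
    have hli : LinearIndependent ℂ ![B' (e 0) (e 1)] := by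
      apply linearIndependent_unique_iff.mpr
      simpa using hB'e
    let bu : Module.Basis (Fin 1) ℂ U := basisOfLinearIndependentOfCardEqFinrank hli (by simp [hdimU])
    have hbu : bu 0 = B' (e 0) (e 1) := by
      simp [bu, coe_basisOfLinearIndependentOfCardEqFinrank]
    refine ⟨0, mkM bu (C (e 0) (e 1)), ?_⟩
    intro v v'
    have key := alt_key (starRingEnd ℂ) e
      (fun v v' => C v v' - mkM bu (C (e 0) (e 1)) (B' v v'))
      (by intro v w v'; simp [map_add]; try abel)
      (by intro c v v'; simp [map_smulₛₗ, smul_sub])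
      (by intro v v' w'; simp [map_add]; try abel)
      (by intro c v v'; simp [map_smulₛₗ, smul_sub])
      (by intro v; simp [hCalt, hB'alt])
      (by
        have h1 : bu.repr (B' (e 0) (e 1)) 0 = 1 := by rw [← hbu]; simp
        simp [mkM_apply, h1])
      v v'
    rw [sub_eq_zero] at key
    rw [key]
    simp
end
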